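/- Theorem 8a (eliminating dependence atoms with one modality): let φ be an MDL formula that contains at most one of the two modalities (i.e. φ contains no occurrence of □, or φ contains no occurrence of ◇), and let φ' be the formula obtained from φ by replacing every positive dependence atom dep(p₁,…,p_{n−1};p_n) with ⊤ and every negated dependence atom ¬dep(p₁,…,p_{n−1};p_n) with ⊥. Then φ is satisfiable if and only if φ' is satisfiable. -/
import Mathlib


/-- Formulas of modal dependence logic over atomic propositions `AP`.
Negation occurs only in front of atoms (`natom`) and dependence atoms (`ndep`).
`dep ps q` is the dependence atom dep(p₁,…,p_{n-1};p_n) with `ps` the list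
p₁,…,p_{n-1} and `q = p_n`.  `or` is dependence disjunction ∨ and
`cor` is classical disjunction ⊘. -/
inductive MDL (AP : Type) : Type
  | top : MDL AP
  | bot : MDL AP
  | atom : AP → MDL AP
  | natom : AP → MDL AP
  | dep : List AP → AP → MDL AP
  | ndep : List AP → AP → MDL AP
  | and : MDL AP → MDL AP → MDL AP
  | or : MDL AP → MDL AP → MDL AP
  | cor : MDL AP → MDL AP → MDL AP
  | box : MDL AP → MDL AP
  | dia : MDL AP → MDL AP

/-- A Kripke frame `W = (S, R, π)`. -/
structure Frame (AP : Type) where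
  S : Type
  R : S → S → Prop
  pi : S → Set AP

/-- Team semantics of MDL: `sat W φ T` means `W, T ⊨ φ`. -/
def sat {AP : Type} (W : Frame AP) : MDL AP → Set W.S → Prop
  | .top, _ => True
  | .bot, T => T = ∅
  | .atom p, T => ∀ s ∈ T, p ∈ W.pi s
  | .natom p, T => ∀ s ∈ T, p ∉ W.pi s
  | .dep ps q, T => ∀ s₁ ∈ T, ∀ s₂ ∈ T,
      (∀ p ∈ ps, (p ∈ W.pi s₁ ↔ p ∈ W.pi s₂)) → (q ∈ W.pi s₁ ↔ q ∈ W.pi s₂)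
  | .ndep _ _, T => T = ∅
  | .and φ ψ, T => sat W φ T ∧ sat W ψ T
  | .or φ ψ, T => ∃ T₁ T₂, T = T₁ ∪ T₂ ∧ sat W φ T₁ ∧ sat W ψ T₂
  | .cor φ ψ, T => sat W φ T ∨ sat W ψ T
  | .box φ, T => sat W φ {s' | ∃ s ∈ T, W.R s s'}
  | .dia φ, T => ∃ T' : Set W.S, sat W φ T' ∧ ∀ s ∈ T, ∃ s' ∈ T', W.R s s'

/-- A formula is satisfiable iff some frame and nonempty team satisfy it. -/
def satisfiable {AP : Type} (φ : MDL AP) : Prop :=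
  ∃ (W : Frame AP) (T : Set W.S), T.Nonempty ∧ sat W φ T

/-- A formula contains no occurrence of ◇. -/
def diaFree {AP : Type} : MDL AP → Prop
  | .dia _ => False
  | .and φ ψ => diaFree φ ∧ diaFree ψ
  | .or φ ψ => diaFree φ ∧ diaFree ψ
  | .cor φ ψ => diaFree φ ∧ diaFree ψ
  | .box φ => diaFree φ
  | _ => True

/-- A formula contains no occurrence of □. -/
def boxFree {AP : Type} : MDL AP → Prop
  | .box _ => False
  | .and φ ψ => boxFree φ ∧ boxFree ψ
  | .or φ ψ => boxFree φ ∧ boxFree ψ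
  | .cor φ ψ => boxFree φ ∧ boxFree ψ
  | .dia φ => boxFree φ
  | _ => True

/-- Replace every dependence atom by ⊤ and every negated dependence atom by ⊥. -/
def elimDep {AP : Type} : MDL AP → MDL AP
  | .dep _ _ => .top
  | .ndep _ _ => .bot
  | .and φ ψ => .and (elimDep φ) (elimDep ψ)
  | .or φ ψ => .or (elimDep φ) (elimDep ψ)
  | .cor φ ψ => .cor (elimDep φ) (elimDep ψ)
  | .box φ => .box (elimDep φ)
  | .dia φ => .dia (elimDep φ)
  | φ => φ

theorem sat_empty {AP : Type} (W : Frame AP) (φ : MDL AP) :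
    sat W φ (∅ : Set W.S) := by
  induction φ with
  | top => trivial
  | bot => rfl
  | atom p => intro s hs; exact absurd hs (Set.notMem_empty s)
  | natom p => intro s hs; exact absurd hs (Set.notMem_empty s)
  | dep ps q => intro s hs; exact absurd hs (Set.notMem_empty s)
  | ndep ps q => rfl
  | and φ ψ ih1 ih2 => exact ⟨ih1, ih2⟩
  | or φ ψ ih1 ih2 => exact ⟨∅, ∅, by simp, ih1, ih2⟩
  | cor φ ψ ih1 ih2 => exact Or.inl ih1
  | box φ ih =>
      have h : {s' | ∃ s ∈ (∅ : Set W.S), W.R s s'} = (∅ : Set W.S) := by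
        ext x; simp
      show sat W φ _
      rw [h]; exact ih
  | dia φ ih => exact ⟨∅, ih, by simp⟩

theorem sat_mono {AP : Type} (W : Frame AP) (φ : MDL AP) :
    ∀ T T' : Set W.S, T' ⊆ T → sat W φ T → sat W φ T' := by
  induction φ with
  | top => intro T T' _ _; trivial
  | bot => intro T T' hsub h; rw [h] at hsub
           exact Set.subset_empty_iff.mp hsub
  | atom p => intro T T' hsub h s hs; exact h s (hsub hs)
  | natom p => intro T T' hsub h s hs; exact h s (hsub hs)
  | dep ps q => intro T T' hsub h s₁ h₁ s₂ h₂ hps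
                exact h s₁ (hsub h₁) s₂ (hsub h₂) hps
  | ndep ps q => intro T T' hsub h; rw [h] at hsub
                 exact Set.subset_empty_iff.mp hsub
  | and φ ψ ih1 ih2 =>
      intro T T' hsub h
      exact ⟨ih1 T T' hsub h.1, ih2 T T' hsub h.2⟩
  | or φ ψ ih1 ih2 =>
      intro T T' hsub h
      obtain ⟨T₁, T₂, hT, h1, h2⟩ := h
      refine ⟨T' ∩ T₁, T' ∩ T₂, ?_, ih1 T₁ _ Set.inter_subset_right h1,
        ih2 T₂ _ Set.inter_subset_right h2⟩
      rw [← Set.inter_union_distrib_left, ← hT]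
      exact (Set.inter_eq_left.mpr hsub).symm
  | cor φ ψ ih1 ih2 =>
      intro T T' hsub h
      exact h.imp (ih1 T T' hsub) (ih2 T T' hsub)
  | box φ ih =>
      intro T T' hsub h
      refine ih _ _ ?_ h
      rintro x ⟨s, hs, hr⟩
      exact ⟨s, hsub hs, hr⟩
  | dia φ ih =>
      intro T T' hsub h
      obtain ⟨T₀, h0, hall⟩ := h
      exact ⟨T₀, h0, fun s hs => hall s (hsub hs)⟩

theorem sat_elimDep {AP : Type} (W : Frame AP) (φ : MDL AP) :
    ∀ T : Set W.S, sat W φ T → sat W (elimDep φ) T := by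
  induction φ with
  | top => intro T h; trivial
  | bot => intro T h; exact h
  | atom p => intro T h; exact h
  | natom p => intro T h; exact h
  | dep ps q => intro T _; trivial
  | ndep ps q => intro T h; exact h
  | and φ ψ ih1 ih2 => intro T h; exact ⟨ih1 T h.1, ih2 T h.2⟩
  | or φ ψ ih1 ih2 =>
      intro T h
      obtain ⟨T₁, T₂, hT, h1, h2⟩ := h
      exact ⟨T₁, T₂, hT, ih1 T₁ h1, ih2 T₂ h2⟩
  | cor φ ψ ih1 ih2 => intro T h; exact h.imp (ih1 T) (ih2 T)
  | box φ ih => intro T h; exact ih _ h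
  | dia φ ih =>
      intro T h
      obtain ⟨T', h', hall⟩ := h
      exact ⟨T', ih T' h', hall⟩

theorem elim_boxFree {AP : Type} (W : Frame AP) (φ : MDL AP) (hb : boxFree φ) :
    ∀ T : Set W.S, T.Subsingleton → sat W (elimDep φ) T → sat W φ T := by
  induction φ with
  | top => intro T _ _; trivial
  | bot => intro T _ h; exact h
  | atom p => intro T _ h; exact h
  | natom p => intro T _ h; exact h
  | dep ps q =>
      intro T hT _ s₁ h₁ s₂ h₂ _
      rw [hT h₁ h₂]
  | ndep ps q => intro T _ h; exact h
  | and φ ψ ih1 ih2 =>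
      intro T hT h
      exact ⟨ih1 hb.1 T hT h.1, ih2 hb.2 T hT h.2⟩
  | or φ ψ ih1 ih2 =>
      intro T hT h
      obtain ⟨T₁, T₂, hT', h1, h2⟩ := h
      refine ⟨T₁, T₂, hT', ?_, ?_⟩
      · exact ih1 hb.1 T₁ (hT.anti (hT' ▸ Set.subset_union_left)) h1
      · exact ih2 hb.2 T₂ (hT.anti (hT' ▸ Set.subset_union_right)) h2
  | cor φ ψ ih1 ih2 =>
      intro T hT h
      exact h.imp (ih1 hb.1 T hT) (ih2 hb.2 T hT)
  | box φ ih => exact absurd hb id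
  | dia φ ih =>
      intro T hT h
      obtain ⟨T', h', hall⟩ := h
      rcases Set.eq_empty_or_nonempty T with rfl | ⟨s, hs⟩
      · exact ⟨∅, sat_empty W φ, by simp⟩
      · obtain ⟨s', hs', hr⟩ := hall s hs
        refine ⟨{s'}, ih hb {s'} (Set.subsingleton_singleton)
          (sat_mono W _ T' {s'} (by simpa using hs') h'), ?_⟩
        intro t ht
        exact ⟨s', rfl, hT ht hs ▸ hr⟩

theorem restrict_sat {AP : Type} (W : Frame AP) (R' : W.S → W.S → Prop)
    (hR : ∀ a b, R' a b → W.R a b) (φ : MDL AP) (hd : diaFree φ) :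
    ∀ T T' : Set W.S, T' ⊆ T → sat W (elimDep φ) T →
      sat ⟨W.S, R', W.pi⟩ (elimDep φ) T' := by
  induction φ with
  | top => intro T T' _ _; trivial
  | bot => intro T T' hsub h; rw [h] at hsub
           exact Set.subset_empty_iff.mp hsub
  | atom p => intro T T' hsub h s hs; exact h s (hsub hs)
  | natom p => intro T T' hsub h s hs; exact h s (hsub hs)
  | dep ps q => intro T T' _ _; trivial
  | ndep ps q => intro T T' hsub h; rw [h] at hsub
                 exact Set.subset_empty_iff.mp hsub
  | and φ ψ ih1 ih2 =>
      intro T T' hsub h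
      exact ⟨ih1 hd.1 T T' hsub h.1, ih2 hd.2 T T' hsub h.2⟩
  | or φ ψ ih1 ih2 =>
      intro T T' hsub h
      obtain ⟨T₁, T₂, hT, h1, h2⟩ := h
      refine ⟨T' ∩ T₁, T' ∩ T₂, ?_, ih1 hd.1 T₁ _ Set.inter_subset_right h1,
        ih2 hd.2 T₂ _ Set.inter_subset_right h2⟩
      rw [← Set.inter_union_distrib_left, ← hT]
      exact (Set.inter_eq_left.mpr hsub).symm
  | cor φ ψ ih1 ih2 =>
      intro T T' hsub h
      exact h.imp (ih1 hd.1 T T' hsub) (ih2 hd.2 T T' hsub)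
  | box φ ih =>
      intro T T' hsub h
      refine ih hd _ _ ?_ h
      rintro x ⟨s, hs, hr⟩
      exact ⟨s, hsub hs, hR s x hr⟩
  | dia φ ih => exact absurd hd id

theorem elim_diaFree {AP : Type} (W : Frame AP)
    (hfun : ∀ a b c, W.R a b → W.R a c → b = c)
    (φ : MDL AP) (hd : diaFree φ) :
    ∀ T : Set W.S, T.Subsingleton → sat W (elimDep φ) T → sat W φ T := by
  induction φ with
  | top => intro T _ _; trivial
  | bot => intro T _ h; exact h
  | atom p => intro T _ h; exact h
  | natom p => intro T _ h; exact h
  | dep ps q =>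
      intro T hT _ s₁ h₁ s₂ h₂ _
      rw [hT h₁ h₂]
  | ndep ps q => intro T _ h; exact h
  | and φ ψ ih1 ih2 =>
      intro T hT h
      exact ⟨ih1 hd.1 T hT h.1, ih2 hd.2 T hT h.2⟩
  | or φ ψ ih1 ih2 =>
      intro T hT h
      obtain ⟨T₁, T₂, hT', h1, h2⟩ := h
      refine ⟨T₁, T₂, hT', ?_, ?_⟩
      · exact ih1 hd.1 T₁ (hT.anti (hT' ▸ Set.subset_union_left)) h1
      · exact ih2 hd.2 T₂ (hT.anti (hT' ▸ Set.subset_union_right)) h2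
  | cor φ ψ ih1 ih2 =>
      intro T hT h
      exact h.imp (ih1 hd.1 T hT) (ih2 hd.2 T hT)
  | box φ ih =>
      intro T hT h
      refine ih hd _ ?_ h
      rintro b ⟨s₁, h₁, r₁⟩ c ⟨s₂, h₂, r₂⟩
      exact hfun s₁ b c r₁ (hT h₂ h₁ ▸ r₂)
  | dia φ ih => exact absurd hd id

/-- Theorem 8a, eliminating dependence atoms with one modality. -/
theorem one_modality_elimDep {AP : Type} (φ : MDL AP)
    (hφ : boxFree φ ∨ diaFree φ) :
    satisfiable φ ↔ satisfiable (elimDep φ) := by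
  constructor
  · rintro ⟨W, T, hne, hsat⟩
    exact ⟨W, T, hne, sat_elimDep W φ T hsat⟩
  · rintro ⟨W, T, ⟨s, hs⟩, hsat⟩
    rcases hφ with hb | hd
    · have h1 : sat W (elimDep φ) {s} :=
        sat_mono W _ T {s} (by simpa using hs) hsat
      exact ⟨W, {s}, ⟨s, rfl⟩, elim_boxFree W φ hb {s}
        Set.subsingleton_singleton h1⟩
    · classical
      set R' : W.S → W.S → Prop :=
        fun a b => ∃ h : ∃ c, W.R a c, b = h.choose with hR'def
      have hR : ∀ a b, R' a b → W.R a b := by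
        rintro a b ⟨h, rfl⟩; exact h.choose_spec
      have hfun : ∀ a b c, R' a b → R' a c → b = c := by
        rintro a b c ⟨h1, rfl⟩ ⟨h2, rfl⟩; rfl
      have h1 : sat ⟨W.S, R', W.pi⟩ (elimDep φ) {s} :=
        restrict_sat W R' hR φ hd T {s} (by simpa using hs) hsat
      exact ⟨⟨W.S, R', W.pi⟩, {s}, ⟨s, rfl⟩,
        elim_diaFree ⟨W.S, R', W.pi⟩ hfun φ hd {s}
          Set.subsingleton_singleton h1⟩
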